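/- Let n be a positive integer and p a prime not dividing 14. The equation 2x^2 + 7y^2 = n has a solution in the p-adic integers Z_p if and only if either v_p(n) is even, or the Legendre symbol (-14/p) = 1. -/

import Mathlib

section Aux

variable {p : ℕ} [Fact p.Prime]

lemma aux_toZMod_eq_zero_iff (x : ℤ_[p]) :
    PadicInt.toZMod x = 0 ↔ (p : ℤ_[p]) ∣ x := by
  rw [← RingHom.mem_ker, PadicInt.ker_toZMod, PadicInt.maximalIdeal_eq_span_p,
    Ideal.mem_span_singleton]

lemma aux_norm_eq_one (x : ℤ_[p]) (h : PadicInt.toZMod x ≠ 0) : ‖x‖ = 1 := by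
  rcases lt_or_eq_of_le (PadicInt.norm_le_one x) with h1 | h1
  · exact absurd ((aux_toZMod_eq_zero_iff x).mpr ((PadicInt.norm_lt_one_iff_dvd x).mp h1)) h
  · exact h1

lemma aux_hensel_quad (h2 : (2 : ZMod p) ≠ 0)
    (u c : ℤ_[p]) (hu : PadicInt.toZMod u ≠ 0) (a : ZMod p) (ha : a ≠ 0)
    (heq : PadicInt.toZMod u * a ^ 2 = PadicInt.toZMod c) :
    ∃ x : ℤ_[p], u * x ^ 2 = c := by
  set F : Polynomial ℤ_[p] := Polynomial.C u * Polynomial.X ^ 2 - Polynomial.C c with hF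
  set a0 : ℤ_[p] := (a.val : ℤ_[p]) with ha0def
  have ha0 : PadicInt.toZMod a0 = a := by
    simp [ha0def, map_natCast, ZMod.natCast_val, ZMod.cast_id]
  have heval : F.eval a0 = u * a0 ^ 2 - c := by simp [hF]
  have hdval : F.derivative.eval a0 = 2 * u * a0 := by
    simp [hF]; ring
  have h1 : ‖F.eval a0‖ < 1 := by
    rw [heval, PadicInt.norm_lt_one_iff_dvd, ← aux_toZMod_eq_zero_iff]
    simp [ha0, heq]
  have hd1 : ‖F.derivative.eval a0‖ = 1 := by
    rw [hdval]
    apply aux_norm_eq_one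
    simp only [map_mul, ha0, map_ofNat]
    exact mul_ne_zero (mul_ne_zero (by simpa using h2) hu) ha
  have hnorm : ‖F.eval a0‖ < ‖F.derivative.eval a0‖ ^ 2 := by
    rw [hd1]; simpa using h1
  obtain ⟨z, hz, -, -, -⟩ := hensels_lemma hnorm
  refine ⟨z, sub_eq_zero.mp ?_⟩
  simpa [hF] using hz

/-- If `-14` has a square root in `ℤ_[p]`, and `2` and `14` are units,
the form `2x²+7y²` represents everything. -/
lemma aux_universal (h14 : IsUnit (14 : ℤ_[p])) (h2u : IsUnit (2 : ℤ_[p]))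
    (s : ℤ_[p]) (hs : s ^ 2 = -14) (c : ℤ_[p]) :
    ∃ x y : ℤ_[p], 2 * x ^ 2 + 7 * y ^ 2 = c := by
  have hsu : IsUnit s := by
    rw [PadicInt.isUnit_iff]
    have h1 : ‖s‖ * ‖s‖ = 1 := by
      rw [← norm_mul, ← sq, hs, ← PadicInt.isUnit_iff]
      simpa using h14.neg
    nlinarith [PadicInt.norm_le_one s, norm_nonneg s]
  obtain ⟨w4, hw4⟩ := (h2u.mul h2u).exists_right_inv
  obtain ⟨ws, hws⟩ := (h2u.mul hsu).exists_right_inv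
  refine ⟨(c + 2) * w4, (2 - c) * ws, ?_⟩
  have hne : (32 : ℤ_[p]) * s ^ 2 ≠ 0 := by
    apply mul_ne_zero
    · exact_mod_cast (by norm_num : ((32 : ℕ) : ℤ_[p]) ≠ 0)
    · exact pow_ne_zero _ hsu.ne_zero
  apply mul_left_cancel₀ hne
  have hw4' : (2 : ℤ_[p]) * 2 * w4 = 1 := hw4
  have hws' : (2 : ℤ_[p]) * s * ws = 1 := hws
  linear_combination (4 * s ^ 2 * (c + 2) ^ 2 * (2 * 2 * w4 + 1)) * hw4' +
    (56 * (2 - c) ^ 2 * (2 * s * ws + 1)) * hws' + (4 * (c - 2) ^ 2) * hs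

end Aux

theorem local_solvability_away_from_fourteen (n : ℕ) (hn : 0 < n)
    (p : ℕ) [Fact p.Prime] (hp : ¬ p ∣ 14) :
    (∃ x y : ℤ_[p], 2 * x ^ 2 + 7 * y ^ 2 = (n : ℤ_[p])) ↔
      (Even (padicValNat p n) ∨ legendreSym p (-14) = 1) := by
  have hpp : p.Prime := Fact.out
  have hp2 : ¬ p ∣ 2 := fun h => hp (h.trans ⟨7, rfl⟩)
  have hp7 : ¬ p ∣ 7 := fun h => hp (h.trans ⟨2, by norm_num⟩)
  have h2z : (2 : ZMod p) ≠ 0 := by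
    simpa using (ZMod.natCast_eq_zero_iff 2 p).not.mpr hp2
  have h7z : (7 : ZMod p) ≠ 0 := by
    simpa using (ZMod.natCast_eq_zero_iff 7 p).not.mpr hp7
  have h14z : (14 : ZMod p) ≠ 0 := by
    simpa using (ZMod.natCast_eq_zero_iff 14 p).not.mpr hp
  have h2u : IsUnit (2 : ℤ_[p]) := by
    rw [PadicInt.isUnit_iff]
    exact aux_norm_eq_one _ (by rw [map_ofNat]; exact h2z)
  have h14u : IsUnit (14 : ℤ_[p]) := by
    rw [PadicInt.isUnit_iff]
    exact aux_norm_eq_one _ (by rw [map_ofNat]; exact h14z)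
  -- unit representation: any `m` with nonzero reduction is represented
  have hrep : ∀ m : ℤ_[p], PadicInt.toZMod m ≠ 0 →
      ∃ x y : ℤ_[p], 2 * x ^ 2 + 7 * y ^ 2 = m := by
    intro m hm
    have hcard : Fintype.card (ZMod p) % 2 = 1 := by
      rw [ZMod.card]
      exact Nat.odd_iff.mp (hpp.odd_of_ne_two (fun h => hp2 (h ▸ dvd_refl p)))
    obtain ⟨a, b, hab⟩ := FiniteField.exists_root_sum_quadratic
      (f := Polynomial.C (2 : ZMod p) * Polynomial.X ^ 2 + Polynomial.C 0 * Polynomial.X +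
        Polynomial.C (-(PadicInt.toZMod m)))
      (g := Polynomial.C (7 : ZMod p) * Polynomial.X ^ 2 + Polynomial.C 0 * Polynomial.X +
        Polynomial.C 0)
      (Polynomial.degree_quadratic h2z) (Polynomial.degree_quadratic h7z) hcard
    simp only [Polynomial.eval_add, Polynomial.eval_mul, Polynomial.eval_pow,
      Polynomial.eval_C, Polynomial.eval_X, zero_mul, add_zero] at hab
    by_cases ha : a = 0
    · -- then 7 b² = m̄, b ≠ 0
      have hb7 : (7 : ZMod p) * b ^ 2 = PadicInt.toZMod m := by
        rw [ha] at hab; linear_combination hab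
      have hb : b ≠ 0 := by
        intro h
        apply hm
        rw [← hb7, h]
        ring
      obtain ⟨y, hy⟩ := aux_hensel_quad h2z 7 m (by rw [map_ofNat]; exact h7z) b hb
        (by rw [map_ofNat]; exact hb7)
      exact ⟨0, y, by rw [← hy]; ring⟩
    · set y0 : ℤ_[p] := (b.val : ℤ_[p]) with hy0
      have hy0b : PadicInt.toZMod y0 = b := by
        simp [hy0, map_natCast, ZMod.natCast_val, ZMod.cast_id]
      have hc : PadicInt.toZMod (2 : ℤ_[p]) * a ^ 2 =
          PadicInt.toZMod (m - 7 * y0 ^ 2) := by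
        simp only [map_sub, map_mul, map_pow, hy0b, map_ofNat]
        linear_combination hab
      obtain ⟨x, hx⟩ := aux_hensel_quad h2z 2 (m - 7 * y0 ^ 2)
        (by rw [map_ofNat]; exact h2z) a ha hc
      exact ⟨x, y0, by rw [hx]; ring⟩
  constructor
  · -- forward: if a solution exists and val is odd, -14 is a square
    rintro ⟨x, y, hxy⟩
    by_contra hcon
    push_neg at hcon
    obtain ⟨hodd, hleg⟩ := hcon
    have hnsq : ¬ IsSquare ((-14 : ℤ) : ZMod p) := by
      intro hsq
      refine hleg ((legendreSym.eq_one_iff p ?_).mpr hsq)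
      push_cast
      simpa [neg_eq_zero] using h14z
    have key : ∀ N : ℕ, 0 < N → (∀ x y : ℤ_[p], 2 * x ^ 2 + 7 * y ^ 2 = (N : ℤ_[p]) →
        Even (padicValNat p N)) := by
      intro N
      induction N using Nat.strong_induction_on with
      | _ N ih =>
        intro hN x y hxy
        by_cases hdvd : p ∣ N
        · set xb := PadicInt.toZMod x with hxbdef
          set yb := PadicInt.toZMod y with hybdef
          have hz : (2 : ZMod p) * xb ^ 2 + 7 * yb ^ 2 = 0 := by
            have h := congrArg PadicInt.toZMod hxy
            simp only [map_add, map_mul, map_pow, map_natCast, map_ofNat, ← hxbdef,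
              ← hybdef] at h
            rw [h]
            exact_mod_cast (ZMod.natCast_eq_zero_iff N p).mpr hdvd
          have hxb : xb = 0 := by
            by_contra hxb0
            have hyb0 : yb ≠ 0 := by
              intro h
              have h2' : (2 : ZMod p) * xb ^ 2 = 0 := by rw [h] at hz; linear_combination hz
              rcases mul_eq_zero.mp h2' with h' | h'
              · exact h2z h'
              · exact hxb0 ((pow_eq_zero_iff two_ne_zero).mp h')
            apply hnsq
            refine ⟨2 * xb * yb⁻¹, ?_⟩
            have hinv : yb * yb⁻¹ = 1 := mul_inv_cancel₀ hyb0
            push_cast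
            linear_combination (-2 * yb⁻¹ ^ 2) * hz + (14 * (yb * yb⁻¹ + 1)) * hinv
          have hyb : yb = 0 := by
            by_contra hyb0
            have h7' : (7 : ZMod p) * yb ^ 2 = 0 := by rw [hxb] at hz; linear_combination hz
            rcases mul_eq_zero.mp h7' with h' | h'
            · exact h7z h'
            · exact hyb0 ((pow_eq_zero_iff two_ne_zero).mp h')
          obtain ⟨x1, hx1⟩ := (aux_toZMod_eq_zero_iff x).mp hxb
          obtain ⟨y1, hy1⟩ := (aux_toZMod_eq_zero_iff y).mp hyb
          have hfac : ((p : ℤ_[p])) ^ 2 * (2 * x1 ^ 2 + 7 * y1 ^ 2) = (N : ℤ_[p]) := by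
            rw [← hxy, hx1, hy1]; ring
          have hpN : p ^ 2 ∣ N := by
            have hnorm : ‖((N : ℤ) : ℤ_[p])‖ ≤ (p : ℝ) ^ (-(2 : ℕ) : ℤ) := by
              push_cast
              rw [← hfac, norm_mul, norm_pow, PadicInt.norm_p]
              calc ((p : ℝ)⁻¹) ^ 2 * ‖2 * x1 ^ 2 + 7 * y1 ^ 2‖
                  ≤ ((p : ℝ)⁻¹) ^ 2 * 1 := by
                    apply mul_le_mul_of_nonneg_left (PadicInt.norm_le_one _)
                    positivity
                _ = (p : ℝ) ^ (-(2 : ℕ) : ℤ) := by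
                    rw [mul_one, zpow_neg, zpow_natCast, inv_pow]
            have := PadicInt.norm_int_le_pow_iff_dvd.mp hnorm
            exact_mod_cast this
          obtain ⟨M, hM⟩ := hpN
          have hM0 : 0 < M := by
            rcases Nat.eq_zero_or_pos M with h | h
            · rw [h, mul_zero] at hM; omega
            · exact h
          have hMlt : M < N := by
            have hp1 : 1 < p := hpp.one_lt
            calc M < p ^ 2 * M := (lt_mul_iff_one_lt_left hM0).mpr (by nlinarith)
              _ = N := hM.symm
          have hsolM : 2 * x1 ^ 2 + 7 * y1 ^ 2 = (M : ℤ_[p]) := by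
            have hpne : ((p : ℤ_[p])) ^ 2 ≠ 0 :=
              pow_ne_zero _ (Nat.cast_ne_zero.mpr hpp.ne_zero)
            apply mul_left_cancel₀ hpne
            rw [hfac, hM]
            push_cast
            ring
          have hEvenM := ih M hMlt hM0 x1 y1 hsolM
          rw [hM, padicValNat.mul (pow_ne_zero _ hpp.ne_zero) hM0.ne',
            padicValNat.prime_pow]
          simpa [Nat.even_add] using hEvenM
        · rw [padicValNat.eq_zero_of_not_dvd hdvd]
          exact Even.zero
    exact hodd (key n hn x y hxy)
  · rintro (heven | hleg)
    · -- even valuation: scale a unit representation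
      obtain ⟨k, hk⟩ := heven
      set v := padicValNat p n with hv
      set m := n / p ^ v with hmdef
      have hfd : n.factorization p = v := Nat.factorization_def n hpp
      have hnm : p ^ v * m = n := by
        have h := Nat.ordProj_mul_ordCompl_eq_self n p
        rwa [hfd] at h
      have hpm : ¬ p ∣ m := by
        have h := Nat.not_dvd_ordCompl hpp hn.ne'
        rwa [hfd] at h
      have hm0 : (PadicInt.toZMod ((m : ℕ) : ℤ_[p])) ≠ 0 := by
        rw [map_natCast]
        exact (ZMod.natCast_eq_zero_iff m p).not.mpr hpm
      obtain ⟨x, y, hxy⟩ := hrep ((m : ℕ) : ℤ_[p]) hm0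
      refine ⟨(p : ℤ_[p]) ^ k * x, (p : ℤ_[p]) ^ k * y, ?_⟩
      have hcast : ((n : ℕ) : ℤ_[p]) = (p : ℤ_[p]) ^ v * ((m : ℕ) : ℤ_[p]) := by
        rw [← hnm]; push_cast; ring
      rw [hcast, hk]
      linear_combination ((p : ℤ_[p]) ^ k) ^ 2 * hxy
    · -- legendre symbol 1: -14 is a square mod p, Hensel gives √(-14), universal
      have hsq : IsSquare ((-14 : ℤ) : ZMod p) := by
        refine (legendreSym.eq_one_iff p ?_).mp hleg
        push_cast
        simpa [neg_eq_zero] using h14z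
      obtain ⟨r, hr⟩ := hsq
      have hrne : r ≠ 0 := by
        intro h
        apply h14z
        have h0 : ((-14 : ℤ) : ZMod p) = 0 := by rw [hr, h, mul_zero]
        push_cast at h0
        linear_combination -h0
      obtain ⟨s, hs⟩ := aux_hensel_quad h2z 1 ((-14 : ℤ) : ℤ_[p]) (by simp) r hrne
        (by rw [map_one, one_mul, map_intCast, sq, ← hr])
      have hs' : s ^ 2 = (-14 : ℤ_[p]) := by
        rw [one_mul] at hs
        rw [hs]; push_cast; ring
      exact aux_universal h14u h2u s hs' (n : ℤ_[p])
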